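/- arXiv:0908.0903 — 2 statements merged into one kernel-verified Lean document; each statement's English description precedes it below -/
import Mathlib

section
/- Consider the standard moment map μ_K(z) = Σⱼ |zⱼ|² eⱼ* on ℂ^N and a subspace 𝔥 ⊆ ℝ^N with projection i* : (ℝ^N)* → 𝔥*. Fix a ∈ 𝔥* and suppose that for every coordinate subspace S = {z_{i₁} = ⋯ = z_{i_n} = 0} meeting Z = (i*∘μ_K)^{-1}(a), the corresponding coordinate subalgebra 𝔰 = span(e_{i₁},…,e_{i_n}) satisfies 𝔰 ∩ 𝔥 = 0. Then Z ∩ (ℂ×)^N ≠ ∅. -/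
/-- The standard moment map μ_K(z) = Σⱼ |zⱼ|² eⱼ* on ℂ^N, valued in the dual
of ℝ^N. -/
noncomputable def muK (N : ℕ) (z : Fin N → ℂ) : Module.Dual ℝ (Fin N → ℝ) :=
  ∑ j : Fin N, ‖z j‖ ^ 2 • LinearMap.proj j

/-!
STATEMENT 13: Let 𝔥 ⊆ ℝ^N be a subspace, i* : (ℝ^N)* → 𝔥* the restriction, and
a ∈ 𝔥*.  Let Z = (i*∘μ_K)⁻¹(a) (assumed nonempty, i.e. a is a value of the
𝔥-moment map).  If for every coordinate subspace S = {z_{i₁} = ⋯ = z_{i_n} = 0}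
meeting Z the corresponding coordinate subalgebra 𝔰 = span(e_{i₁},…,e_{i_n})
satisfies 𝔰 ∩ 𝔥 = 0, then Z ∩ (ℂ^×)^N ≠ ∅.
-/
theorem stmt_13 {N : ℕ} (𝔥 : Submodule ℝ (Fin N → ℝ)) (a : Module.Dual ℝ 𝔥)
    (hZ : ∃ z : Fin N → ℂ, (muK N z).comp 𝔥.subtype = a)
    (htrans : ∀ I : Finset (Fin N),
      (∃ z : Fin N → ℂ, (muK N z).comp 𝔥.subtype = a ∧ ∀ i ∈ I, z i = 0) →
      Submodule.span ℝ ((fun i => (Pi.single i 1 : Fin N → ℝ)) '' I) ⊓ 𝔥 = ⊥) :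
    ∃ z : Fin N → ℂ, (muK N z).comp 𝔥.subtype = a ∧ ∀ j, z j ≠ 0 := by
  classical
  obtain ⟨z, hz⟩ := hZ
  rcases Nat.eq_zero_or_pos N with hN | hN
  · exact ⟨z, hz, fun j => absurd j.2 (by omega)⟩
  set c : Fin N → ℝ := fun j => ‖z j‖ ^ 2 with hc
  set I : Finset (Fin N) := Finset.univ.filter (fun j => z j = 0) with hI
  have hIz : ∀ i ∈ I, z i = 0 := fun i hi => by simpa [hI] using hi
  have hIc : ∀ j, j ∈ I ↔ c j = 0 := by
    intro j
    simp [hI, hc, pow_eq_zero_iff, map_eq_zero, norm_eq_zero]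
  have hspan := htrans I ⟨z, hz, hIz⟩
  -- construct a "dual" vector d, orthogonal to 𝔥 and equal to 1 on I
  have hdex : ∃ d : Fin N → ℝ,
      (∀ h : Fin N → ℝ, h ∈ 𝔥 → ∑ j, d j * h j = 0) ∧ ∀ i ∈ I, d i = 1 := by
    set 𝔰 : Submodule ℝ (Fin N → ℝ) :=
      Submodule.span ℝ ((fun i => (Pi.single i 1 : Fin N → ℝ)) '' I) with h𝔰
    set qS : 𝔰 →ₗ[ℝ] (Fin N → ℝ) ⧸ 𝔥 := 𝔥.mkQ.comp 𝔰.subtype with hqS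
    have hinj : Function.Injective qS := by
      rw [← LinearMap.ker_eq_bot, eq_bot_iff]
      intro x hx
      have hx1 : (x : Fin N → ℝ) ∈ 𝔰 ⊓ 𝔥 := by
        refine ⟨x.2, ?_⟩
        simpa [hqS, Submodule.Quotient.mk_eq_zero] using hx
      rw [hspan] at hx1
      exact Subtype.ext (by simpa using hx1)
    set e := LinearEquiv.ofInjective qS hinj with he
    set σ : 𝔰 →ₗ[ℝ] ℝ := (∑ i ∈ I, LinearMap.proj i).comp 𝔰.subtype with hσ
    obtain ⟨ψ, hψ⟩ := LinearMap.exists_extend (σ.comp e.symm.toLinearMap)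
    set φ : (Fin N → ℝ) →ₗ[ℝ] ℝ := ψ.comp 𝔥.mkQ with hφ
    refine ⟨fun j => φ (Pi.single j 1), ?_, ?_⟩
    · intro h hh
      have hφh : φ h = 0 := by
        simp [hφ, (Submodule.Quotient.mk_eq_zero 𝔥).2 hh]
      have h1 : h = ∑ j, h j • (Pi.single j 1 : Fin N → ℝ) := by
        conv_lhs => rw [← Finset.univ_sum_single h]
        refine Finset.sum_congr rfl fun j _ => ?_
        rw [← Pi.single_smul, smul_eq_mul, mul_one]
      calc ∑ j, φ (Pi.single j 1) * h j = φ h := by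
            conv_rhs => rw [h1]
            simp [mul_comm]
        _ = 0 := hφh
    · intro i hi
      have hmem : (Pi.single i 1 : Fin N → ℝ) ∈ 𝔰 :=
        Submodule.subset_span ⟨i, by simpa using hi, rfl⟩
      set x : 𝔰 := ⟨Pi.single i 1, hmem⟩ with hx
      have h2 : φ (Pi.single i 1) = ψ (qS x) := by simp [hφ, hqS, hx]
      have h3 : ψ (qS x) = σ x := by
        have h4 : qS x = (LinearMap.range qS).subtype (e x) := by
          simp [he, LinearEquiv.ofInjective_apply]
        rw [h4]
        have h5 := LinearMap.congr_fun hψ (e x)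
        simp only [LinearMap.comp_apply] at h5 ⊢
        rw [h5]
        simp
      have h5 : σ x = 1 := by
        simp only [hσ, hx, LinearMap.comp_apply, Submodule.subtype_apply,
          LinearMap.sum_apply, LinearMap.proj_apply]
        rw [Finset.sum_eq_single i]
        · simp
        · intro b hb hbne; exact Pi.single_eq_of_ne hbne 1
        · intro h; exact absurd hi h
      show φ (Pi.single i 1) = 1
      rw [h2, h3, h5]
  obtain ⟨d, hperp, hdI⟩ := hdex
  -- choose t > 0 small enough
  have hNe : (Finset.univ : Finset (Fin N)).Nonempty := ⟨⟨0, hN⟩, Finset.mem_univ _⟩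
  set t : ℝ := Finset.univ.inf' hNe (fun j => if c j = 0 then 1 else c j / (|d j| + 1))
    with ht
  have htpos : 0 < t := by
    rw [ht, Finset.lt_inf'_iff]
    intro j _
    by_cases hj : c j = 0
    · simp [hj]
    · have : 0 < c j := lt_of_le_of_ne (by positivity) (Ne.symm hj)
      simp only [hj, if_false]
      positivity
  have hcpos : ∀ j, 0 < c j + t * d j := by
    intro j
    by_cases hj : c j = 0
    · have := hdI j ((hIc j).2 hj)
      rw [hj, this]
      simpa using htpos
    · have hcj : 0 < c j := lt_of_le_of_ne (by positivity) (Ne.symm hj)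
      have hle : t ≤ c j / (|d j| + 1) := by
        have := Finset.inf'_le (b := j) (fun j => if c j = 0 then 1 else c j / (|d j| + 1))
          (Finset.mem_univ j)
        rw [ht]
        exact le_trans this (by simp [hj])
      have h6 : t * |d j| < c j := by
        calc t * |d j| ≤ (c j / (|d j| + 1)) * |d j| :=
              mul_le_mul_of_nonneg_right hle (abs_nonneg _)
          _ < c j := by
              rw [div_mul_eq_mul_div, div_lt_iff₀ (by positivity)]
              nlinarith [abs_nonneg (d j)]
      have h7 : t * -|d j| ≤ t * d j :=
        mul_le_mul_of_nonneg_left (neg_abs_le (d j)) htpos.le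
      nlinarith
  refine ⟨fun j => ((Real.sqrt (c j + t * d j) : ℝ) : ℂ), ?_, ?_⟩
  · ext h
    have hzh := LinearMap.congr_fun hz h
    simp only [muK, LinearMap.comp_apply, LinearMap.sum_apply, LinearMap.smul_apply,
      LinearMap.proj_apply, smul_eq_mul, Submodule.subtype_apply] at hzh ⊢
    have habs : ∀ j, ‖((Real.sqrt (c j + t * d j) : ℝ) : ℂ)‖ ^ 2
        = c j + t * d j := by
      intro j
      rw [Complex.norm_real, Real.norm_eq_abs, sq_abs, Real.sq_sqrt (hcpos j).le]
    calc ∑ j, ‖((Real.sqrt (c j + t * d j) : ℝ) : ℂ)‖ ^ 2 * (h : Fin N → ℝ) j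
        = ∑ j, (c j + t * d j) * (h : Fin N → ℝ) j :=
          Finset.sum_congr rfl fun j _ => by rw [habs j]
      _ = (∑ j, c j * (h : Fin N → ℝ) j) + t * ∑ j, d j * (h : Fin N → ℝ) j := by
          rw [Finset.mul_sum, ← Finset.sum_add_distrib]
          exact Finset.sum_congr rfl fun j _ => by ring
      _ = a h := by rw [hperp _ h.2, hzh]; simp [hc]
  · intro j
    simp only [ne_eq, Complex.ofReal_eq_zero]
    exact Real.sqrt_ne_zero'.2 (hcpos j)
end

section
/- Let (M,ω) be a symplectic manifold with a free Hamiltonian action of a compact Lie group G with moment map μ, and let ξ be a regular value of μ fixed by the coadjoint action. Then on Z = μ^{-1}(ξ), the kernel of the restricted form ω|_Z at a point z equals the tangent space to the G-orbit through z: ker(ω|_{T_zZ}) = T_z(G·z). -/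
/-!
STATEMENT 16: Let (M,ω) be symplectic with a free Hamiltonian action of a
compact Lie group G, moment map μ, and ξ a regular value of μ fixed by the
coadjoint action.  Then for z ∈ Z = μ⁻¹(ξ), the kernel of ω|_{T_zZ} equals the
tangent space to the G-orbit: ker(ω|_{T_zZ}) = T_z(G·z).

Model: M = E a finite-dimensional real normed space, 𝔤 the Lie algebra of G (a
finite-dimensional real vector space), X : 𝔤 → Vect(E) the (linear) generating
vector fields, μ : E → 𝔤*, with the moment map condition
⟨dμ_m(v), ε⟩ = ω_m(X_ε(m), v).  T_zZ = ker dμ_z and T_z(G·z) = {X_ε(z)}.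
Freeness of the (compact) G-action enters through local freeness at z
(X_ε(z) ≠ 0 for ε ≠ 0), and Ad*-invariance of ξ through G preserving Z
(X_ε(z) ∈ T_zZ).
-/
theorem stmt_16 {E : Type*} [NormedAddCommGroup E] [NormedSpace ℝ E]
    [FiniteDimensional ℝ E]
    {𝔤 : Type*} [AddCommGroup 𝔤] [Module ℝ 𝔤] [FiniteDimensional ℝ 𝔤]
    (ω : E → E →ₗ[ℝ] E →ₗ[ℝ] ℝ)
    -- ω is skew-symmetric and nondegenerate:
    (hskew : ∀ m u v, ω m u v = -ω m v u)
    (hnd : ∀ m (u : E), u ≠ 0 → ∃ v : E, ω m u v ≠ 0)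
    (X : 𝔤 →ₗ[ℝ] (E → E)) (μ : E → Module.Dual ℝ 𝔤) (ξ : Module.Dual ℝ 𝔤)
    -- moment map condition:
    (hmom : ∀ (ε : 𝔤) (m v : E), ω m (X ε m) v = fderiv ℝ (fun p => μ p ε) m v)
    (z : E) (hz : μ z = ξ)
    -- ξ is a regular value of μ (at points of Z; stated at z):
    (hreg : ∀ φ : Module.Dual ℝ 𝔤, ∃ v : E, ∀ ε : 𝔤,
      fderiv ℝ (fun p => μ p ε) z v = φ ε)
    -- the action is (locally) free at z:
    (hfree : ∀ ε : 𝔤, X ε z = 0 → ε = 0)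
    -- G preserves Z (from Ad*-invariance of ξ): orbit directions are tangent to Z:
    (horb : ∀ ε η : 𝔤, fderiv ℝ (fun p => μ p η) z (X ε z) = 0) :
    -- ker(ω|_{T_zZ}) = T_z(G·z):
    {v : E | (∀ ε : 𝔤, fderiv ℝ (fun p => μ p ε) z v = 0) ∧
        ∀ w : E, (∀ ε : 𝔤, fderiv ℝ (fun p => μ p ε) z w = 0) → ω z v w = 0} =
      {v : E | ∃ ε : 𝔤, v = X ε z} := by
  classical
  set B : LinearMap.BilinForm ℝ E := ω z with hB
  have hrefl : B.IsRefl := fun u v h => by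
    have := hskew z v u; rw [h, neg_zero] at this; exact this
  have hBnd : B.Nondegenerate := by
    refine (LinearMap.IsRefl.nondegenerate_iff_separatingLeft hrefl).mpr ?_
    intro u hu
    by_contra h
    obtain ⟨v, hv⟩ := hnd z u h
    exact hv (hu v)
  -- orbit subspace
  set L : 𝔤 →ₗ[ℝ] E := (LinearMap.proj z).comp X with hL
  set O : Submodule ℝ E := LinearMap.range L with hO
  have hLz : ∀ ε : 𝔤, L ε = X ε z := fun ε => rfl
  -- T_zZ is the ω-orthogonal of O
  have hW : ∀ v : E, (∀ ε : 𝔤, fderiv ℝ (fun p => μ p ε) z v = 0) ↔ v ∈ B.orthogonal O := by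
    intro v
    constructor
    · rintro h u ⟨ε, rfl⟩
      show B (X ε z) v = 0
      rw [hB]
      rw [hmom ε z v, h ε]
    · intro h ε
      rw [← hmom ε z v]
      exact h (X ε z) ⟨ε, rfl⟩
  have hOW : O ≤ B.orthogonal O := by
    rintro u ⟨ε, rfl⟩
    exact (hW (X ε z)).mp (fun η => horb ε η)
  have hkey : B.orthogonal (B.orthogonal O) = O :=
    LinearMap.BilinForm.orthogonal_orthogonal hBnd hrefl O
  ext v
  simp only [Set.mem_setOf_eq]
  constructor
  · rintro ⟨h1, h2⟩
    have hv : v ∈ B.orthogonal (B.orthogonal O) := by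
      intro w hw
      have := h2 w ((hW w).mpr hw)
      show B w v = 0
      exact hrefl v w this
    rw [hkey] at hv
    obtain ⟨ε, hε⟩ := hv
    exact ⟨ε, hε.symm⟩
  · rintro ⟨ε, rfl⟩
    have hvO : X ε z ∈ O := ⟨ε, rfl⟩
    refine ⟨fun η => horb ε η, fun w hw => ?_⟩
    exact (hW w).mp hw (X ε z) hvO
end
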